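/- For all integers μ, κ, j with 0 ≤ κ ≤ μ and 0 < j < μ+1−κ, Σ_{n=κ}^{μ} C(μ,n) C(n,κ) ((−1)^{n−κ}/(n+1−κ)) C(n+1−κ, j) = 0. -/

import Mathlib

open Finset

lemma key_alt (M k : ℕ) (hk : k < M) :
    ∑ m ∈ Finset.range (M + 1), (-1 : ℚ) ^ m * (M.choose m : ℚ) * (m.choose k : ℚ) = 0 := by
  have hsub : Finset.Ico k (M + 1) ⊆ Finset.range (M + 1) := by
    intro x hx
    simp only [Finset.mem_Ico] at hx
    simp [hx.2]
  have h1 : ∑ m ∈ Finset.range (M + 1), (-1 : ℚ) ^ m * (M.choose m : ℚ) * (m.choose k : ℚ)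
      = ∑ m ∈ Finset.Ico k (M + 1), (-1 : ℚ) ^ m * (M.choose m : ℚ) * (m.choose k : ℚ) := by
    refine (Finset.sum_subset hsub ?_).symm
    intro x hx hnx
    simp only [Finset.mem_Ico, Finset.mem_range, not_and, not_lt] at hx hnx
    have hxk : x < k := by
      by_contra hc
      exact absurd (hnx (le_of_not_gt hc)) (by omega)
    rw [Nat.choose_eq_zero_of_lt hxk]
    simp
  rw [h1, Finset.sum_Ico_eq_sum_range]
  have hMk : M + 1 - k = (M - k) + 1 := by omega
  rw [hMk]
  have h2 : ∀ t ∈ Finset.range ((M - k) + 1),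
      (-1 : ℚ) ^ (k + t) * (M.choose (k + t) : ℚ) * ((k + t).choose k : ℚ)
        = ((-1 : ℚ) ^ k * (M.choose k : ℚ)) * ((-1 : ℚ) ^ t * ((M - k).choose t : ℚ)) := by
    intro t ht
    simp only [Finset.mem_range] at ht
    have hkt : k + t ≤ M := by omega
    have := Nat.choose_mul (n := M) (k := k + t) (s := k) (Nat.le_add_right k t)
    have hst : k + t - k = t := by omega
    rw [hst] at this
    have hcast : (M.choose (k + t) : ℚ) * ((k + t).choose k : ℚ)
        = (M.choose k : ℚ) * ((M - k).choose t : ℚ) := by exact_mod_cast congrArg (Nat.cast : ℕ → ℚ) this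
    rw [pow_add]
    linear_combination ((-1 : ℚ) ^ k * (-1 : ℚ) ^ t) * hcast
  rw [Finset.sum_congr rfl h2, ← Finset.mul_sum]
  have h3 : ∑ t ∈ Finset.range ((M - k) + 1), (-1 : ℚ) ^ t * ((M - k).choose t : ℚ) = 0 := by
    have := Int.alternating_sum_range_choose_of_ne (n := M - k) (by omega)
    have : ((∑ i ∈ Finset.range (M - k + 1), (-1 : ℤ) ^ i * ((M - k).choose i : ℤ) : ℤ) : ℚ) = 0 := by
      rw [this]; simp
    push_cast at this
    exact this
  rw [h3, mul_zero]

/-- `Σ_{n=κ}^{μ} C(μ,n) C(n,κ) ((−1)^{n−κ}/(n+1−κ)) C(n+1−κ,j) = 0`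
for `0 < j < μ+1−κ`. -/
theorem stmt8 (μ κ j : ℕ) (h : κ ≤ μ) (hj0 : 0 < j) (hj : j < μ + 1 - κ) :
    ∑ n ∈ Finset.Icc κ μ,
        (μ.choose n : ℚ) * (n.choose κ : ℚ) *
          ((-1 : ℚ) ^ (n - κ) / ((n + 1 - κ : ℕ) : ℚ)) * ((n + 1 - κ).choose j : ℚ) =
      0 := by
  have hIcc : Finset.Icc κ μ = Finset.Ico κ (μ + 1) := by
    ext x; simp [Nat.lt_succ_iff]
  rw [hIcc, Finset.sum_Ico_eq_sum_range]
  have hM : μ + 1 - κ = (μ - κ) + 1 := by omega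
  rw [hM]
  have hterm : ∀ m ∈ Finset.range ((μ - κ) + 1),
      (μ.choose (κ + m) : ℚ) * ((κ + m).choose κ : ℚ) *
          ((-1 : ℚ) ^ (κ + m - κ) / (((κ + m) + 1 - κ : ℕ) : ℚ)) * (((κ + m) + 1 - κ).choose j : ℚ)
        = ((μ.choose κ : ℚ) / (j : ℚ)) * ((-1 : ℚ) ^ m * ((μ - κ).choose m : ℚ) * (m.choose (j - 1) : ℚ)) := by
    intro m hm
    simp only [Finset.mem_range] at hm
    have h1 : κ + m - κ = m := by omega
    have h2 : (κ + m) + 1 - κ = m + 1 := by omega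
    rw [h1, h2]
    have hkm : κ + m ≤ μ := by omega
    have hc1 := Nat.choose_mul (n := μ) (k := κ + m) (s := κ) (Nat.le_add_right κ m)
    rw [show κ + m - κ = m by omega] at hc1
    have hc1q : (μ.choose (κ + m) : ℚ) * ((κ + m).choose κ : ℚ)
        = (μ.choose κ : ℚ) * ((μ - κ).choose m : ℚ) := by exact_mod_cast congrArg (Nat.cast : ℕ → ℚ) hc1
    have hc2 := Nat.add_one_mul_choose_eq m (j - 1)
    rw [show j - 1 + 1 = j by omega] at hc2
    have hc2q : ((m + 1 : ℕ) : ℚ) * (m.choose (j - 1) : ℚ) = ((m + 1).choose j : ℚ) * (j : ℚ) := by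
      exact_mod_cast congrArg (Nat.cast : ℕ → ℚ) hc2
    have hm1 : ((m + 1 : ℕ) : ℚ) ≠ 0 := by positivity
    have hjq : (j : ℚ) ≠ 0 := by positivity
    have hchoose : ((m + 1).choose j : ℚ) / ((m + 1 : ℕ) : ℚ) = (m.choose (j - 1) : ℚ) / (j : ℚ) := by
      field_simp
      push_cast at hc2q ⊢
      linear_combination -hc2q
    field_simp at hchoose ⊢
    push_cast at hc1q hchoose ⊢
    linear_combination (((m + 1).choose j : ℚ) * (j : ℚ)) * hc1q
      + ((μ.choose κ : ℚ) * ((μ - κ).choose m : ℚ)) * hchoose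
  rw [Finset.sum_congr rfl hterm, ← Finset.mul_sum]
  have hkey := key_alt (μ - κ) (j - 1) (by omega)
  rw [hkey, mul_zero]
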